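/- Every tribe, with its fibrations and homotopy equivalences as weak equivalences, is a fibration category; moreover every homomorphism of tribes (a functor preserving fibrations, anodyne morphisms, terminal objects and pullbacks along fibrations) is an exact functor of the underlying fibration categories. -/

import Mathlib

open CategoryTheory CategoryTheory.Limits

universe v u

namespace Paper

variable {T : Type u} [Category.{v} T]

/-- A morphism is anodyne (w.r.t. a class of fibrations) if it has the left
lifting property against all fibrations. -/
def Anodyne (Fib : MorphismProperty T) : MorphismProperty T :=
  fun _ _ i => ∀ ⦃u w : T⦄ (g : u ⟶ w), Fib g → HasLiftingProperty i g

/-- A tribe structure on a category `T`. -/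
structure TribeStruct (T : Type u) [Category.{v} T] where
  /-- fibrations -/
  Fib : MorphismProperty T
  fib_id : ∀ x : T, Fib (𝟙 x)
  fib_comp : ∀ {x y z : T} (f : x ⟶ y) (g : y ⟶ z), Fib f → Fib g → Fib (f ≫ g)
  /-- (T1): terminal object, all objects fibrant -/
  term : T
  isTerminal : IsTerminal term
  all_fibrant : ∀ x : T, Fib (isTerminal.from x)
  /-- (T2): pullbacks along fibrations exist and fibrations are stable -/
  pullback_exists : ∀ {x y z : T} (f : x ⟶ z) (g : y ⟶ z), Fib g → HasPullback f g
  fib_stable : ∀ {p x y z : T} {fst : p ⟶ x} {snd : p ⟶ y} {f : x ⟶ z} {g : y ⟶ z},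
    IsPullback fst snd f g → Fib g → Fib fst
  /-- (T3): factorization as anodyne followed by fibration -/
  factor : ∀ {x y : T} (f : x ⟶ y), ∃ (z : T) (i : x ⟶ z) (q : z ⟶ y),
    Anodyne Fib i ∧ Fib q ∧ i ≫ q = f
  /-- (T4): anodyne morphisms are stable under pullback along fibrations -/
  anodyne_stable : ∀ {p x y z : T} {fst : p ⟶ x} {snd : p ⟶ y} {f : x ⟶ z} {g : y ⟶ z},
    IsPullback fst snd f g → Anodyne Fib f → Fib g → Anodyne Fib snd

/-- A path object for `x` in a tribe: a factorization of the diagonal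
`x → x × x` as an anodyne morphism followed by a fibration (the product is
presented by an explicit binary product cone). -/
structure PathObject (R : TribeStruct T) (x : T) where
  P : T
  σ : x ⟶ P
  π₀ : P ⟶ x
  π₁ : P ⟶ x
  σ_anodyne : Anodyne R.Fib σ
  σ_π₀ : σ ≫ π₀ = 𝟙 x
  σ_π₁ : σ ≫ π₁ = 𝟙 x
  prod : T
  p₀ : prod ⟶ x
  p₁ : prod ⟶ x
  isProd : IsLimit (BinaryFan.mk p₀ p₁)
  π : P ⟶ prod
  π_p₀ : π ≫ p₀ = π₀
  π_p₁ : π ≫ p₁ = π₁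
  π_fib : R.Fib π

/-- Homotopy of morphisms in a tribe. -/
def Homotopic (R : TribeStruct T) {x y : T} (f g : x ⟶ y) : Prop :=
  ∃ (Po : PathObject R y) (H : x ⟶ Po.P), H ≫ Po.π₀ = f ∧ H ≫ Po.π₁ = g

/-- Homotopy equivalences in a tribe. -/
def IsHtpyEquiv (R : TribeStruct T) {x y : T} (f : x ⟶ y) : Prop :=
  ∃ g : y ⟶ x, Homotopic R (f ≫ g) (𝟙 x) ∧ Homotopic R (g ≫ f) (𝟙 y)

/-- Homotopy equivalences (= weak equivalences) of a tribe as a morphism property. -/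
def hW (R : TribeStruct T) : MorphismProperty T :=
  fun _ _ f => IsHtpyEquiv R f

/-- A fibration category structure on a category `C`. -/
structure FibCatStruct (C : Type u) [Category.{v} C] where
  /-- weak equivalences -/
  Weq : MorphismProperty C
  /-- fibrations -/
  Fib : MorphismProperty C
  weq_id : ∀ x : C, Weq (𝟙 x)
  weq_comp : ∀ {x y z : C} (f : x ⟶ y) (g : y ⟶ z), Weq f → Weq g → Weq (f ≫ g)
  fib_id : ∀ x : C, Fib (𝟙 x)
  fib_comp : ∀ {x y z : C} (f : x ⟶ y) (g : y ⟶ z), Fib f → Fib g → Fib (f ≫ g)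
  /-- (F1): terminal object, all objects fibrant -/
  term : C
  isTerminal : IsTerminal term
  all_fibrant : ∀ x : C, Fib (isTerminal.from x)
  /-- (F2): pullbacks along fibrations exist -/
  pullback_exists : ∀ {x y z : C} (f : x ⟶ z) (g : y ⟶ z), Fib g → HasPullback f g
  fib_stable : ∀ {p x y z : C} {fst : p ⟶ x} {snd : p ⟶ y} {f : x ⟶ z} {g : y ⟶ z},
    IsPullback fst snd f g → Fib g → Fib fst
  acyclic_fib_stable : ∀ {p x y z : C} {fst : p ⟶ x} {snd : p ⟶ y} {f : x ⟶ z} {g : y ⟶ z},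
    IsPullback fst snd f g → Fib g → Weq g → Weq fst
  /-- (F3): factorization as weak equivalence followed by fibration -/
  factor : ∀ {x y : C} (f : x ⟶ y), ∃ (z : C) (i : x ⟶ z) (q : z ⟶ y),
    Weq i ∧ Fib q ∧ i ≫ q = f
  /-- (F4): 2-out-of-6 for weak equivalences -/
  two_out_of_six : ∀ {a b c d : C} (f : a ⟶ b) (g : b ⟶ c) (h : c ⟶ d),
    Weq (f ≫ g) → Weq (g ≫ h) → Weq f ∧ Weq g ∧ Weq h ∧ Weq (f ≫ g ≫ h)


end Paper
namespace TribeProof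

open CategoryTheory CategoryTheory.Limits Paper

universe v₁ u₁

variable {T : Type u₁} [Category.{v₁} T]

/-- Build an `IsPullback` from an explicit universal property. -/
theorem isPullback_of_universal {p x y z : T} (fst : p ⟶ x) (snd : p ⟶ y)
    (f : x ⟶ z) (g : y ⟶ z) (w : fst ≫ f = snd ≫ g)
    (lift : ∀ {a : T} (u : a ⟶ x) (v : a ⟶ y), u ≫ f = v ≫ g → (a ⟶ p))
    (lift_fst : ∀ {a : T} (u : a ⟶ x) (v : a ⟶ y) (h : u ≫ f = v ≫ g),
      lift u v h ≫ fst = u)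
    (lift_snd : ∀ {a : T} (u : a ⟶ x) (v : a ⟶ y) (h : u ≫ f = v ≫ g),
      lift u v h ≫ snd = v)
    (hom_ext : ∀ {a : T} (m m' : a ⟶ p), m ≫ fst = m' ≫ fst → m ≫ snd = m' ≫ snd → m = m') :
    IsPullback fst snd f g := by
  refine IsPullback.of_isLimit' ⟨w⟩ ?_
  exact PullbackCone.IsLimit.mk _ (fun s => lift s.fst s.snd s.condition)
    (fun s => lift_fst _ _ _) (fun s => lift_snd _ _ _)
    (fun s m hm1 hm2 => hom_ext m _ (by rw [hm1, lift_fst]) (by rw [hm2, lift_snd]))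

/-- A pullback over a terminal object is a binary product. -/
noncomputable def isLimitBinaryFanOfIsPullback {p x y z : T} {p₀ : p ⟶ x} {p₁ : p ⟶ y}
    {f : x ⟶ z} {g : y ⟶ z} (ht : IsTerminal z) (pb : IsPullback p₀ p₁ f g) :
    IsLimit (BinaryFan.mk p₀ p₁) :=
  BinaryFan.isLimitMk (fun s => pb.lift s.fst s.snd (ht.hom_ext _ _))
    (fun _ => pb.lift_fst _ _ _) (fun _ => pb.lift_snd _ _ _)
    (fun s m h1 h2 => pb.hom_ext (by rw [h1]; exact (pb.lift_fst _ _ _).symm) (by rw [h2]; exact (pb.lift_snd _ _ _).symm))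

variable (R : TribeStruct T)

lemma anodyne_comp {a b c : T} {i : a ⟶ b} {i' : b ⟶ c}
    (h : Anodyne R.Fib i) (h' : Anodyne R.Fib i') : Anodyne R.Fib (i ≫ i') := by
  intro u w g hg
  haveI := h g hg
  haveI := h' g hg
  infer_instance

lemma fib_of_isIso {a b : T} (e : a ⟶ b) [IsIso e] : R.Fib e := by
  have pb : IsPullback e e (𝟙 b) (𝟙 b) := by
    refine isPullback_of_universal e e (𝟙 b) (𝟙 b) rfl
      (fun u v h => u ≫ inv e) (fun u v h => by simp) (fun u v h => by
        simp only [Category.comp_id] at h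
        simp [h]) (fun m m' h1 h2 => by
        have : m ≫ e ≫ inv e = m' ≫ e ≫ inv e := by
          rw [← Category.assoc, ← Category.assoc, h1]
        simpa using this)
  exact R.fib_stable pb (R.fib_id b)

/-- The key "graph" lemma: given a pullback of a fibration `q : X₂ ⟶ Y` along a
fibration `c : X₁ ⟶ Y`, and an anodyne section `σ'` of `q`, the induced
"graph" map `X₁ ⟶ P` is anodyne. -/
lemma anodyne_k {X₁ X₂ Y P : T} {c : X₁ ⟶ Y} {q : X₂ ⟶ Y} {σ' : Y ⟶ X₂}
    (hc : R.Fib c) (hσ : Anodyne R.Fib σ') (hσq : σ' ≫ q = 𝟙 Y)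
    {fstP : P ⟶ X₁} {sndP : P ⟶ X₂} (pb : IsPullback fstP sndP c q)
    {k : X₁ ⟶ P} (hk1 : k ≫ fstP = 𝟙 X₁) (hk2 : k ≫ sndP = c ≫ σ') :
    Anodyne R.Fib k := by
  have hsnd : R.Fib sndP := R.fib_stable pb.flip hc
  have pb2 : IsPullback c k σ' sndP := by
    refine isPullback_of_universal c k σ' sndP (by rw [hk2])
      (fun u v h => v ≫ fstP) (fun u v h => ?_) (fun u v h => ?_) (fun m m' h1 h2 => ?_)
    · calc (v ≫ fstP) ≫ c = v ≫ sndP ≫ q := by rw [Category.assoc, pb.w]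
        _ = (v ≫ sndP) ≫ q := by rw [Category.assoc]
        _ = (u ≫ σ') ≫ q := by rw [h]
        _ = u ≫ σ' ≫ q := by rw [Category.assoc]
        _ = u := by rw [hσq, Category.comp_id]
    · refine pb.hom_ext ?_ ?_
      · rw [Category.assoc, Category.assoc, hk1, Category.comp_id]
      · have e1 : (v ≫ fstP) ≫ c = u := by
          calc (v ≫ fstP) ≫ c = v ≫ sndP ≫ q := by rw [Category.assoc, pb.w]
            _ = (u ≫ σ') ≫ q := by rw [← Category.assoc, h]
            _ = u := by rw [Category.assoc, hσq, Category.comp_id]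
        calc ((v ≫ fstP) ≫ k) ≫ sndP = (v ≫ fstP) ≫ c ≫ σ' := by rw [Category.assoc, hk2]
          _ = ((v ≫ fstP) ≫ c) ≫ σ' := by simp only [Category.assoc]
          _ = u ≫ σ' := by rw [e1]
          _ = v ≫ sndP := h
    · have := congrArg (fun t => t ≫ fstP) h2
      simpa [Category.assoc, hk1] using this
  exact R.anodyne_stable pb2 hσ hsnd


/-- A canonical path object, whose binary product is realised as a pullback
over the terminal object (so that all projections are fibrations). -/
structure CPO (R : TribeStruct T) (y : T) where
  Po : PathObject R y
  pbProd : IsPullback Po.p₀ Po.p₁ (R.isTerminal.from y) (R.isTerminal.from y)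
  fib_p₀ : R.Fib Po.p₀
  fib_p₁ : R.Fib Po.p₁
  fib_π₀ : R.Fib Po.π₀
  fib_π₁ : R.Fib Po.π₁

noncomputable def mkCPO (y : T) : CPO R y := by
  haveI := R.pullback_exists (R.isTerminal.from y) (R.isTerminal.from y) (R.all_fibrant y)
  let pb := IsPullback.of_hasPullback (R.isTerminal.from y) (R.isTerminal.from y)
  let δ : y ⟶ pullback (R.isTerminal.from y) (R.isTerminal.from y) :=
    pb.lift (𝟙 y) (𝟙 y) rfl
  have hδ₀ : δ ≫ pullback.fst (R.isTerminal.from y) (R.isTerminal.from y) = 𝟙 y :=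
    pb.lift_fst _ _ _
  have hδ₁ : δ ≫ pullback.snd (R.isTerminal.from y) (R.isTerminal.from y) = 𝟙 y :=
    pb.lift_snd _ _ _
  let h := R.factor δ
  have hσ : Anodyne R.Fib h.choose_spec.choose := h.choose_spec.choose_spec.choose_spec.1
  have hq : R.Fib h.choose_spec.choose_spec.choose := h.choose_spec.choose_spec.choose_spec.2.1
  have hfac : h.choose_spec.choose ≫ h.choose_spec.choose_spec.choose = δ :=
    h.choose_spec.choose_spec.choose_spec.2.2
  have fibp₀ : R.Fib (pullback.fst (R.isTerminal.from y) (R.isTerminal.from y)) :=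
    R.fib_stable pb (R.all_fibrant y)
  have fibp₁ : R.Fib (pullback.snd (R.isTerminal.from y) (R.isTerminal.from y)) :=
    R.fib_stable pb.flip (R.all_fibrant y)
  refine
    { Po :=
      { P := h.choose
        σ := h.choose_spec.choose
        π₀ := h.choose_spec.choose_spec.choose ≫ pullback.fst _ _
        π₁ := h.choose_spec.choose_spec.choose ≫ pullback.snd _ _
        σ_anodyne := hσ
        σ_π₀ := by rw [← Category.assoc, hfac, hδ₀]
        σ_π₁ := by rw [← Category.assoc, hfac, hδ₁]
        prod := pullback (R.isTerminal.from y) (R.isTerminal.from y)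
        p₀ := pullback.fst _ _
        p₁ := pullback.snd _ _
        isProd := isLimitBinaryFanOfIsPullback R.isTerminal pb
        π := h.choose_spec.choose_spec.choose
        π_p₀ := rfl
        π_p₁ := rfl
        π_fib := hq }
      pbProd := pb
      fib_p₀ := fibp₀
      fib_p₁ := fibp₁
      fib_π₀ := R.fib_comp _ _ hq fibp₀
      fib_π₁ := R.fib_comp _ _ hq fibp₁ }

variable {R}

lemma prod_hom_ext {y : T} (Po : PathObject R y) {a : T} {m m' : a ⟶ Po.prod}
    (h0 : m ≫ Po.p₀ = m' ≫ Po.p₀) (h1 : m ≫ Po.p₁ = m' ≫ Po.p₁) : m = m' := by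
  apply Po.isProd.hom_ext
  rintro ⟨⟨⟩⟩
  · simpa using h0
  · simpa using h1

/-- Comparison of path objects: any path object maps to any other one,
compatibly with the projections, possibly twisted by a morphism `e`. -/
lemma exists_compare {y z : T} (Po : PathObject R y) (Po' : PathObject R z) (e : y ⟶ z) :
    ∃ θ : Po.P ⟶ Po'.P, θ ≫ Po'.π₀ = Po.π₀ ≫ e ∧ θ ≫ Po'.π₁ = Po.π₁ ≫ e := by
  let bot : Po.P ⟶ Po'.prod := Po'.isProd.lift (BinaryFan.mk (Po.π₀ ≫ e) (Po.π₁ ≫ e))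
  have hb₀ : bot ≫ Po'.p₀ = Po.π₀ ≫ e := Po'.isProd.fac _ ⟨WalkingPair.left⟩
  have hb₁ : bot ≫ Po'.p₁ = Po.π₁ ≫ e := Po'.isProd.fac _ ⟨WalkingPair.right⟩
  have sq : CommSq (e ≫ Po'.σ) Po.σ Po'.π bot := by
    constructor
    refine prod_hom_ext Po' ?_ ?_
    · simp only [Category.assoc, Po'.π_p₀, hb₀, Po'.σ_π₀, Category.comp_id]
      rw [← Category.assoc, Po.σ_π₀, Category.id_comp]
    · simp only [Category.assoc, Po'.π_p₁, hb₁, Po'.σ_π₁, Category.comp_id]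
      rw [← Category.assoc, Po.σ_π₁, Category.id_comp]
  haveI := Po.σ_anodyne Po'.π Po'.π_fib
  refine ⟨sq.lift, ?_, ?_⟩
  · rw [← Po'.π_p₀, ← Category.assoc, sq.fac_right, hb₀]
  · rw [← Po'.π_p₁, ← Category.assoc, sq.fac_right, hb₁]

lemma homotopic_to_cpo {x y : T} {f g : x ⟶ y} (C : CPO R y) (h : Homotopic R f g) :
    ∃ H : x ⟶ C.Po.P, H ≫ C.Po.π₀ = f ∧ H ≫ C.Po.π₁ = g := by
  obtain ⟨Po, H, h1, h2⟩ := h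
  obtain ⟨θ, t0, t1⟩ := exists_compare Po C.Po (𝟙 y)
  exact ⟨H ≫ θ, by rw [Category.assoc, t0, ← Category.assoc, h1, Category.comp_id],
    by rw [Category.assoc, t1, ← Category.assoc, h2, Category.comp_id]⟩

variable (R)

lemma homotopic_refl {x y : T} (f : x ⟶ y) : Homotopic R f f := by
  let C := mkCPO R y
  exact ⟨C.Po, f ≫ C.Po.σ,
    by rw [Category.assoc, C.Po.σ_π₀, Category.comp_id],
    by rw [Category.assoc, C.Po.σ_π₁, Category.comp_id]⟩

lemma homotopic_symm {x y : T} {f g : x ⟶ y} (h : Homotopic R f g) : Homotopic R g f := by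
  let C := mkCPO R y
  obtain ⟨H, h1, h2⟩ := homotopic_to_cpo C h
  let sw : C.Po.prod ⟶ C.Po.prod := C.pbProd.lift C.Po.p₁ C.Po.p₀ (R.isTerminal.hom_ext _ _)
  have sw₀ : sw ≫ C.Po.p₀ = C.Po.p₁ := C.pbProd.lift_fst _ _ _
  have sw₁ : sw ≫ C.Po.p₁ = C.Po.p₀ := C.pbProd.lift_snd _ _ _
  have swsw : sw ≫ sw = 𝟙 _ := by
    refine C.pbProd.hom_ext ?_ ?_
    · rw [Category.assoc, sw₀, sw₁, Category.id_comp]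
    · rw [Category.assoc, sw₁, sw₀, Category.id_comp]
  haveI : IsIso sw := ⟨sw, swsw, swsw⟩
  refine ⟨{
    P := C.Po.P
    σ := C.Po.σ
    π₀ := C.Po.π₁
    π₁ := C.Po.π₀
    σ_anodyne := C.Po.σ_anodyne
    σ_π₀ := C.Po.σ_π₁
    σ_π₁ := C.Po.σ_π₀
    prod := C.Po.prod
    p₀ := C.Po.p₀
    p₁ := C.Po.p₁
    isProd := C.Po.isProd
    π := C.Po.π ≫ sw
    π_p₀ := by rw [Category.assoc, sw₀, C.Po.π_p₁]
    π_p₁ := by rw [Category.assoc, sw₁, C.Po.π_p₀]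
    π_fib := R.fib_comp _ _ C.Po.π_fib (fib_of_isIso R sw) }, H, h2, h1⟩

lemma homotopic_trans {x y : T} {f g h : x ⟶ y} (h1 : Homotopic R f g)
    (h2 : Homotopic R g h) : Homotopic R f h := by
  let C := mkCPO R y
  obtain ⟨H₁, e10, e11⟩ := homotopic_to_cpo C h1
  obtain ⟨H₂, e20, e21⟩ := homotopic_to_cpo C h2
  haveI := R.pullback_exists C.Po.π₁ C.Po.π₀ C.fib_π₀
  let Qpb := IsPullback.of_hasPullback C.Po.π₁ C.Po.π₀
  set fstQ := pullback.fst C.Po.π₁ C.Po.π₀ with hfstQ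
  set sndQ := pullback.snd C.Po.π₁ C.Po.π₀ with hsndQ
  let k : C.Po.P ⟶ pullback C.Po.π₁ C.Po.π₀ :=
    Qpb.lift (𝟙 _) (C.Po.π₁ ≫ C.Po.σ)
      (by rw [Category.id_comp, Category.assoc, C.Po.σ_π₀, Category.comp_id])
  have hk1 : k ≫ fstQ = 𝟙 _ := Qpb.lift_fst _ _ _
  have hk2 : k ≫ sndQ = C.Po.π₁ ≫ C.Po.σ := Qpb.lift_snd _ _ _
  have hkAno : Anodyne R.Fib k := anodyne_k R C.fib_π₁ C.Po.σ_anodyne C.Po.σ_π₀ Qpb hk1 hk2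
  -- the "P × y" object
  haveI := R.pullback_exists (R.isTerminal.from C.Po.P) (R.isTerminal.from y)
    (R.all_fibrant y)
  let Wpb := IsPullback.of_hasPullback (R.isTerminal.from C.Po.P) (R.isTerminal.from y)
  set w₀ := pullback.fst (R.isTerminal.from C.Po.P) (R.isTerminal.from y) with hw₀
  set w₁ := pullback.snd (R.isTerminal.from C.Po.P) (R.isTerminal.from y) with hw₁
  set d₀ := fstQ ≫ C.Po.π₀ with hd₀
  set d₁ := sndQ ≫ C.Po.π₁ with hd₁
  let β : pullback C.Po.π₁ C.Po.π₀ ⟶ pullback (R.isTerminal.from C.Po.P) (R.isTerminal.from y) :=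
    Wpb.lift fstQ d₁ (R.isTerminal.hom_ext _ _)
  have hβ₀ : β ≫ w₀ = fstQ := Wpb.lift_fst _ _ _
  have hβ₁ : β ≫ w₁ = d₁ := Wpb.lift_snd _ _ _
  let m : pullback (R.isTerminal.from C.Po.P) (R.isTerminal.from y) ⟶ C.Po.prod :=
    C.pbProd.lift (w₀ ≫ C.Po.π₁) w₁ (R.isTerminal.hom_ext _ _)
  have hm₀ : m ≫ C.Po.p₀ = w₀ ≫ C.Po.π₁ := C.pbProd.lift_fst _ _ _
  have hm₁ : m ≫ C.Po.p₁ = w₁ := C.pbProd.lift_snd _ _ _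
  let n : pullback (R.isTerminal.from C.Po.P) (R.isTerminal.from y) ⟶ C.Po.prod :=
    C.pbProd.lift (w₀ ≫ C.Po.π₀) w₁ (R.isTerminal.hom_ext _ _)
  have hn₀ : n ≫ C.Po.p₀ = w₀ ≫ C.Po.π₀ := C.pbProd.lift_fst _ _ _
  have hn₁ : n ≫ C.Po.p₁ = w₁ := C.pbProd.lift_snd _ _ _
  have pbβ : IsPullback β sndQ m C.Po.π := by
    refine isPullback_of_universal β sndQ m C.Po.π ?_
      (fun u v hv => Qpb.lift (u ≫ w₀) v ?_) (fun u v hv => ?_) (fun u v hv => ?_)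
      (fun a a' ha1 ha2 => ?_)
    · refine prod_hom_ext C.Po ?_ ?_
      · simp only [Category.assoc, hm₀, C.Po.π_p₀]
        rw [← Category.assoc, hβ₀, Qpb.w]
      · simp only [Category.assoc, hm₁, C.Po.π_p₁, hβ₁, hd₁]
    · have := congrArg (fun t => t ≫ C.Po.p₀) hv
      simpa only [Category.assoc, hm₀, C.Po.π_p₀] using this
    · refine Wpb.hom_ext ?_ ?_
      · simp only [Category.assoc, hβ₀, Qpb.lift_fst]
      · have := congrArg (fun t => t ≫ C.Po.p₁) hv
        simp only [Category.assoc, hm₁, C.Po.π_p₁] at this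
        simp only [Category.assoc, hβ₁, hd₁]
        rw [← Category.assoc, Qpb.lift_snd, this]
    · exact Qpb.lift_snd _ _ _
    · refine Qpb.hom_ext ?_ ?_
      · have := congrArg (fun t => t ≫ w₀) ha1
        simpa only [Category.assoc, hβ₀] using this
      · exact ha2
  have fibβ : R.Fib β := R.fib_stable pbβ C.Po.π_fib
  have pbn : IsPullback n w₀ C.Po.p₀ C.Po.π₀ := by
    refine isPullback_of_universal n w₀ C.Po.p₀ C.Po.π₀ hn₀
      (fun u v hv => Wpb.lift v (u ≫ C.Po.p₁) (R.isTerminal.hom_ext _ _))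
      (fun u v hv => ?_) (fun u v hv => Wpb.lift_fst _ _ _)
      (fun a a' ha1 ha2 => ?_)
    · refine prod_hom_ext C.Po ?_ ?_
      · simp only [Category.assoc, hn₀]
        rw [← Category.assoc, Wpb.lift_fst, hv]
      · simp only [Category.assoc, hn₁, Wpb.lift_snd]
    · refine Wpb.hom_ext ha2 ?_
      have := congrArg (fun t => t ≫ C.Po.p₁) ha1
      simpa only [Category.assoc, hn₁] using this
  have fibn : R.Fib n := R.fib_stable pbn C.fib_π₀
  let πQ : pullback C.Po.π₁ C.Po.π₀ ⟶ C.Po.prod :=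
    C.pbProd.lift d₀ d₁ (R.isTerminal.hom_ext _ _)
  have hπQ₀ : πQ ≫ C.Po.p₀ = d₀ := C.pbProd.lift_fst _ _ _
  have hπQ₁ : πQ ≫ C.Po.p₁ = d₁ := C.pbProd.lift_snd _ _ _
  have hπQβ : πQ = β ≫ n := by
    refine prod_hom_ext C.Po ?_ ?_
    · simp only [Category.assoc, hn₀, hπQ₀]
      rw [← Category.assoc, hβ₀]
    · simp only [Category.assoc, hn₁, hπQ₁, hβ₁]
  have fibπQ : R.Fib πQ := by rw [hπQβ]; exact R.fib_comp _ _ fibβ fibn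
  refine ⟨{
    P := pullback C.Po.π₁ C.Po.π₀
    σ := C.Po.σ ≫ k
    π₀ := d₀
    π₁ := d₁
    σ_anodyne := anodyne_comp R C.Po.σ_anodyne hkAno
    σ_π₀ := by
      rw [hd₀, Category.assoc, ← Category.assoc k, hk1, Category.id_comp, C.Po.σ_π₀]
    σ_π₁ := by
      rw [hd₁, Category.assoc, ← Category.assoc k, hk2]
      simp only [Category.assoc, C.Po.σ_π₁, Category.comp_id]
    prod := C.Po.prod
    p₀ := C.Po.p₀
    p₁ := C.Po.p₁
    isProd := C.Po.isProd
    π := πQ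
    π_p₀ := hπQ₀
    π_p₁ := hπQ₁
    π_fib := fibπQ }, Qpb.lift H₁ H₂ (e11.trans e20.symm), ?_, ?_⟩
  · show Qpb.lift H₁ H₂ _ ≫ (fstQ ≫ C.Po.π₀) = f
    rw [← Category.assoc, Qpb.lift_fst, e10]
  · show Qpb.lift H₁ H₂ _ ≫ (sndQ ≫ C.Po.π₁) = h
    rw [← Category.assoc, Qpb.lift_snd, e21]

lemma homotopic_postcomp {x y z : T} {f f' : x ⟶ y} (e : y ⟶ z)
    (h : Homotopic R f f') : Homotopic R (f ≫ e) (f' ≫ e) := by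
  obtain ⟨Po, H, h1, h2⟩ := h
  let C := mkCPO R z
  obtain ⟨θ, t0, t1⟩ := exists_compare Po C.Po e
  exact ⟨C.Po, H ≫ θ, by rw [Category.assoc, t0, ← Category.assoc, h1],
    by rw [Category.assoc, t1, ← Category.assoc, h2]⟩

lemma homotopic_precomp {x y z : T} {f f' : y ⟶ z} (e : x ⟶ y)
    (h : Homotopic R f f') : Homotopic R (e ≫ f) (e ≫ f') := by
  obtain ⟨Po, H, h1, h2⟩ := h
  exact ⟨Po, e ≫ H, by rw [Category.assoc, h1], by rw [Category.assoc, h2]⟩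

/-- The homotopy relation as a `HomRel`. -/
def homRel (R : TribeStruct T) : HomRel T := fun _ _ f g => Homotopic R f g

lemma homCongruence : Congruence (homRel R) where
  equivalence := ⟨fun f => homotopic_refl R f, fun h => homotopic_symm R h,
    fun h h' => homotopic_trans R h h'⟩
  comp_left := by
    intro X Y Z f g g' h
    exact homotopic_precomp R f h
  comp_right := by
    intro X Y Z f f' g h
    exact homotopic_postcomp R g h

/-- The homotopy category quotient functor. -/
noncomputable abbrev QF (R : TribeStruct T) := CategoryTheory.Quotient.functor (homRel R)

lemma qf_eq_iff {x y : T} (f g : x ⟶ y) :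
    (QF R).map f = (QF R).map g ↔ Homotopic R f g := by
  haveI := homCongruence R
  exact Quotient.functor_map_eq_iff (homRel R) f g

lemma heq_iff_isIso {x y : T} (f : x ⟶ y) :
    IsHtpyEquiv R f ↔ IsIso ((QF R).map f) := by
  constructor
  · rintro ⟨g, h1, h2⟩
    refine ⟨(QF R).map g, ?_, ?_⟩
    · rw [← (QF R).map_comp, ← (QF R).map_id x]
      exact (qf_eq_iff R _ _).mpr h1
    · rw [← (QF R).map_comp, ← (QF R).map_id y]
      exact (qf_eq_iff R _ _).mpr h2
  · intro hiso
    obtain ⟨g, hg⟩ := Quot.exists_rep (inv ((QF R).map f))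
    have hmap : (QF R).map g = inv ((QF R).map f) := hg
    refine ⟨g, ?_, ?_⟩
    · refine (qf_eq_iff R _ _).mp ?_
      rw [(QF R).map_comp, (QF R).map_id, hmap, IsIso.hom_inv_id]
    · refine (qf_eq_iff R _ _).mp ?_
      rw [(QF R).map_comp, (QF R).map_id, hmap, IsIso.inv_hom_id]

lemma isIso_of_comp_eq_id_left {C : Type*} [Category C] {X Y : C} (a : X ⟶ Y) (b : Y ⟶ X)
    [IsIso a] (h : a ≫ b = 𝟙 X) : IsIso b := by
  have : b = inv a := by
    rw [← Category.id_comp b, ← IsIso.inv_hom_id a, Category.assoc, h, Category.comp_id]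
  rw [this]; infer_instance

lemma isIso_of_comp_eq_id_right {C : Type*} [Category C] {X Y : C} (a : X ⟶ Y) (b : Y ⟶ X)
    [IsIso b] (h : a ≫ b = 𝟙 X) : IsIso a := by
  have : a = inv b := by
    rw [← Category.comp_id a, ← IsIso.hom_inv_id b, ← Category.assoc, h, Category.id_comp]
  rw [this]; infer_instance

lemma anodyne_heq {x y : T} {i : x ⟶ y} (hi : Anodyne R.Fib i) : IsHtpyEquiv R i := by
  -- retraction, by lifting against the terminal fibration
  haveI := hi (R.isTerminal.from x) (R.all_fibrant x)
  have sq1 : CommSq (𝟙 x) i (R.isTerminal.from x) (R.isTerminal.from y) :=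
    ⟨R.isTerminal.hom_ext _ _⟩
  let r : y ⟶ x := sq1.lift
  have hri : i ≫ r = 𝟙 x := sq1.fac_left
  -- homotopy r ≫ i ≃ 𝟙 y
  let C := mkCPO R y
  haveI := hi C.Po.π C.Po.π_fib
  have sq2 : CommSq (i ≫ C.Po.σ) i C.Po.π
      (C.pbProd.lift (r ≫ i) (𝟙 y) (R.isTerminal.hom_ext _ _)) := by
    constructor
    refine prod_hom_ext C.Po ?_ ?_
    · simp only [Category.assoc, C.Po.π_p₀, C.Po.σ_π₀, Category.comp_id, C.pbProd.lift_fst]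
      rw [← Category.assoc, hri, Category.id_comp]
    · simp only [Category.assoc, C.Po.π_p₁, C.Po.σ_π₁, Category.comp_id, C.pbProd.lift_snd]
  refine ⟨r, ?_, ?_⟩
  · rw [hri]; exact homotopic_refl R _
  · refine ⟨C.Po, sq2.lift, ?_, ?_⟩
    · rw [← C.Po.π_p₀, ← Category.assoc, sq2.fac_right, C.pbProd.lift_fst]
    · rw [← C.Po.π_p₁, ← Category.assoc, sq2.fac_right, C.pbProd.lift_snd]

/-- Brown factorisation data for an acyclic fibration. -/
lemma brown {E Bo : T} (p : E ⟶ Bo) (hp : R.Fib p) (he : IsHtpyEquiv R p) :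
    ∃ (Z : T) (j : E ⟶ Z) (ρ : Z ⟶ Bo) (L : Z ⟶ E) (ς : Bo ⟶ Z),
      Anodyne R.Fib j ∧ R.Fib ρ ∧ j ≫ ρ = p ∧ j ≫ L = 𝟙 E ∧ L ≫ p = ρ ∧ ς ≫ ρ = 𝟙 Bo := by
  obtain ⟨g', _, hg2⟩ := he
  let C := mkCPO R Bo
  obtain ⟨K, hK0, hK1⟩ := homotopic_to_cpo C hg2
  haveI := R.pullback_exists p C.Po.π₀ C.fib_π₀
  let Zpb := IsPullback.of_hasPullback p C.Po.π₀
  set fstZ := pullback.fst p C.Po.π₀ with hfstZ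
  set sndZ := pullback.snd p C.Po.π₀ with hsndZ
  let j : E ⟶ pullback p C.Po.π₀ :=
    Zpb.lift (𝟙 E) (p ≫ C.Po.σ)
      (by rw [Category.id_comp, Category.assoc, C.Po.σ_π₀, Category.comp_id])
  have hj1 : j ≫ fstZ = 𝟙 E := Zpb.lift_fst _ _ _
  have hj2 : j ≫ sndZ = p ≫ C.Po.σ := Zpb.lift_snd _ _ _
  have hjAno : Anodyne R.Fib j := anodyne_k R hp C.Po.σ_anodyne C.Po.σ_π₀ Zpb hj1 hj2
  set ρ := sndZ ≫ C.Po.π₁ with hρdef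
  have hρfib : R.Fib ρ := R.fib_comp _ _ (R.fib_stable Zpb.flip hp) C.fib_π₁
  have hjρ : j ≫ ρ = p := by
    rw [hρdef, ← Category.assoc, hj2, Category.assoc, C.Po.σ_π₁, Category.comp_id]
  haveI := hjAno p hp
  have sq : CommSq (𝟙 E) j p ρ := ⟨by rw [Category.id_comp, hjρ]⟩
  let ς : Bo ⟶ pullback p C.Po.π₀ := Zpb.lift g' K hK0.symm
  have hςρ : ς ≫ ρ = 𝟙 Bo := by
    rw [hρdef, ← Category.assoc, Zpb.lift_snd, hK1]
  exact ⟨pullback p C.Po.π₀, j, ρ, sq.lift, ς, hjAno, hρfib, hjρ, sq.fac_left,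
    sq.fac_right, hςρ⟩

lemma exists_section {E Bo : T} (p : E ⟶ Bo) (hp : R.Fib p) (he : IsHtpyEquiv R p) :
    ∃ s : Bo ⟶ E, s ≫ p = 𝟙 Bo := by
  obtain ⟨Z, j, ρ, L, ς, _, _, _, _, hLp, hςρ⟩ := brown R p hp he
  exact ⟨ς ≫ L, by rw [Category.assoc, hLp, hςρ]⟩

/-- Pullback of an acyclic fibration along a *fibration* is a homotopy
equivalence. -/
lemma heq_pullback_fib {M z y N : T} {q₀ : M ⟶ z} {g : y ⟶ z}
    (hq₀ : R.Fib q₀) (hg : R.Fib g) (hge : IsHtpyEquiv R g)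
    {nFst : N ⟶ M} {nSnd : N ⟶ y} (npb : IsPullback nFst nSnd q₀ g) :
    IsHtpyEquiv R nFst := by
  obtain ⟨Z, j, ρ, L, ς, hjAno, hρ, hjρ, hjL, hLg, hςρ⟩ := brown R g hg hge
  have hjIso : IsIso ((QF R).map j) := (heq_iff_isIso R j).mp (anodyne_heq R hjAno)
  have hgIso : IsIso ((QF R).map g) := (heq_iff_isIso R g).mp hge
  have hρIso : IsIso ((QF R).map ρ) := by
    have : (QF R).map j ≫ (QF R).map ρ = (QF R).map g := by
      rw [← (QF R).map_comp, hjρ]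
    haveI : IsIso ((QF R).map j ≫ (QF R).map ρ) := by rw [this]; infer_instance
    exact IsIso.of_isIso_comp_left ((QF R).map j) ((QF R).map ρ)
  have hςIso : IsIso ((QF R).map ς) := by
    have : (QF R).map ς ≫ (QF R).map ρ = 𝟙 _ := by
      rw [← (QF R).map_comp, hςρ, (QF R).map_id]
    exact isIso_of_comp_eq_id_right _ _ this
  obtain ⟨V, aV, m, haV, hm, hfacς⟩ := R.factor ς
  have hνfib : R.Fib (m ≫ ρ) := R.fib_comp _ _ hm hρ
  have haVν : aV ≫ m ≫ ρ = 𝟙 z := by rw [← Category.assoc, hfacς, hςρ]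
  have hmIso : IsIso ((QF R).map m) := by
    have heq1 : (QF R).map aV ≫ (QF R).map m = (QF R).map ς := by
      rw [← (QF R).map_comp, hfacς]
    haveI : IsIso ((QF R).map aV) := (heq_iff_isIso R aV).mp (anodyne_heq R haV)
    haveI : IsIso ((QF R).map aV ≫ (QF R).map m) := by rw [heq1]; infer_instance
    exact IsIso.of_isIso_comp_left ((QF R).map aV) ((QF R).map m)
  obtain ⟨u, hu⟩ := exists_section R m hm ((heq_iff_isIso R m).mpr hmIso)
  -- pull everything back along q₀
  haveI := R.pullback_exists q₀ (m ≫ ρ) hνfib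
  let Vpb := IsPullback.of_hasPullback q₀ (m ≫ ρ)
  set vFst := pullback.fst q₀ (m ≫ ρ) with hvFst
  set vSnd := pullback.snd q₀ (m ≫ ρ) with hvSnd
  let a' : M ⟶ pullback q₀ (m ≫ ρ) :=
    Vpb.lift (𝟙 M) (q₀ ≫ aV) (by rw [Category.id_comp, Category.assoc, haVν, Category.comp_id])
  have ha'1 : a' ≫ vFst = 𝟙 M := Vpb.lift_fst _ _ _
  have ha'2 : a' ≫ vSnd = q₀ ≫ aV := Vpb.lift_snd _ _ _
  have ha'Ano : Anodyne R.Fib a' := anodyne_k R hq₀ haV haVν Vpb ha'1 ha'2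
  have hvFstIso : IsIso ((QF R).map vFst) := by
    have heq2 : (QF R).map a' ≫ (QF R).map vFst = 𝟙 _ := by
      rw [← (QF R).map_comp, ha'1, (QF R).map_id]
    haveI : IsIso ((QF R).map a') := (heq_iff_isIso R a').mp (anodyne_heq R ha'Ano)
    exact isIso_of_comp_eq_id_left _ _ heq2
  -- N is a retract of the pullback of V over M
  let J' : N ⟶ pullback q₀ (m ≫ ρ) :=
    Vpb.lift nFst (nSnd ≫ j ≫ u) (by
      rw [npb.w]
      simp only [Category.assoc]
      congr 1
      rw [← Category.assoc u, hu, Category.id_comp, hjρ])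
  let Rr : pullback q₀ (m ≫ ρ) ⟶ N :=
    npb.lift vFst (vSnd ≫ m ≫ L) (by
      rw [Vpb.w]
      simp only [Category.assoc]
      congr 2
      rw [hLg])
  have hJ'1 : J' ≫ vFst = nFst := Vpb.lift_fst _ _ _
  have hJ'2 : J' ≫ vSnd = nSnd ≫ j ≫ u := Vpb.lift_snd _ _ _
  have hR1 : Rr ≫ nFst = vFst := npb.lift_fst _ _ _
  have hR2 : Rr ≫ nSnd = vSnd ≫ m ≫ L := npb.lift_snd _ _ _
  have hJR : J' ≫ Rr = 𝟙 N := by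
    refine npb.hom_ext ?_ ?_
    · rw [Category.assoc, hR1, hJ'1, Category.id_comp]
    · rw [Category.assoc, hR2, Category.id_comp, ← Category.assoc, hJ'2]
      simp only [Category.assoc]
      rw [← Category.assoc u m, hu, Category.id_comp, hjL, Category.comp_id]
  refine (heq_iff_isIso R nFst).mpr ?_
  refine ⟨inv ((QF R).map vFst) ≫ (QF R).map Rr, ?_, ?_⟩
  · have e1 : (QF R).map J' ≫ (QF R).map vFst = (QF R).map nFst := by
      rw [← (QF R).map_comp, hJ'1]
    rw [← e1, Category.assoc, ← Category.assoc ((QF R).map vFst), IsIso.hom_inv_id,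
      Category.id_comp, ← (QF R).map_comp, hJR, (QF R).map_id]
  · have e2 : (QF R).map Rr ≫ (QF R).map nFst = (QF R).map vFst := by
      rw [← (QF R).map_comp, hR1]
    rw [Category.assoc, e2, IsIso.inv_hom_id]

/-- Acyclic fibrations are stable under arbitrary base change. -/
lemma acyclic_stable {p x y z : T} {fst : p ⟶ x} {snd : p ⟶ y} {f : x ⟶ z} {g : y ⟶ z}
    (pb : IsPullback fst snd f g) (hg : R.Fib g) (hge : IsHtpyEquiv R g) :
    IsHtpyEquiv R fst := by
  obtain ⟨M, a, q₀, ha, hq₀, hfa⟩ := R.factor f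
  haveI := R.pullback_exists q₀ g hg
  let npb := IsPullback.of_hasPullback q₀ g
  set nFst := pullback.fst q₀ g with hnFst
  set nSnd := pullback.snd q₀ g with hnSnd
  have hnFstHeq : IsHtpyEquiv R nFst := heq_pullback_fib R hq₀ hg hge npb
  have hnFstFib : R.Fib nFst := R.fib_stable npb hg
  let t : p ⟶ pullback q₀ g :=
    npb.lift (fst ≫ a) snd (by rw [Category.assoc, hfa, pb.w])
  have ht1 : t ≫ nFst = fst ≫ a := npb.lift_fst _ _ _
  have ht2 : t ≫ nSnd = snd := npb.lift_snd _ _ _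
  have pbt : IsPullback fst t a nFst := by
    refine isPullback_of_universal fst t a nFst ht1.symm
      (fun u v hv => pb.lift u (v ≫ nSnd) ?_) (fun u v hv => pb.lift_fst _ _ _)
      (fun u v hv => ?_) (fun m m' hm1 hm2 => ?_)
    · rw [← hfa, ← Category.assoc, hv, Category.assoc, npb.w, Category.assoc]
    · refine npb.hom_ext ?_ ?_
      · rw [Category.assoc, ht1, ← Category.assoc, pb.lift_fst, hv]
      · rw [Category.assoc, ht2, pb.lift_snd]
    · refine pb.hom_ext hm1 ?_
      have := congrArg (fun w => w ≫ nSnd) hm2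
      simpa only [Category.assoc, ht2] using this
  have htAno : Anodyne R.Fib t := R.anodyne_stable pbt ha hnFstFib
  refine (heq_iff_isIso R fst).mpr ?_
  haveI : IsIso ((QF R).map a) := (heq_iff_isIso R a).mp (anodyne_heq R ha)
  haveI : IsIso ((QF R).map t) := (heq_iff_isIso R t).mp (anodyne_heq R htAno)
  haveI : IsIso ((QF R).map nFst) := (heq_iff_isIso R nFst).mp hnFstHeq
  have e : (QF R).map fst ≫ (QF R).map a = (QF R).map t ≫ (QF R).map nFst := by
    rw [← (QF R).map_comp, ← (QF R).map_comp, pbt.w]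
  haveI : IsIso ((QF R).map fst ≫ (QF R).map a) := by rw [e]; infer_instance
  exact IsIso.of_isIso_comp_right ((QF R).map fst) ((QF R).map a)

lemma two_of_six_iso {C : Type*} [Category C] {a b c d : C}
    (A : a ⟶ b) (B : b ⟶ c) (Cc : c ⟶ d) (h1 : IsIso (A ≫ B)) (h2 : IsIso (B ≫ Cc)) :
    IsIso A ∧ IsIso B ∧ IsIso Cc := by
  have hB : IsIso B := by
    refine ⟨Cc ≫ inv (B ≫ Cc), ?_, ?_⟩
    · rw [← Category.assoc, IsIso.hom_inv_id]
    · have hs : (inv (A ≫ B) ≫ A) ≫ B = 𝟙 c := by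
        rw [Category.assoc, IsIso.inv_hom_id]
      have : Cc ≫ inv (B ≫ Cc) = inv (A ≫ B) ≫ A := by
        rw [← Category.id_comp (Cc ≫ inv (B ≫ Cc)), ← hs]
        simp only [Category.assoc]
        rw [← Category.assoc B Cc, IsIso.hom_inv_id, Category.comp_id]
      rw [this, hs]
  constructor
  · exact IsIso.of_isIso_comp_right A B
  constructor
  · exact hB
  · exact IsIso.of_isIso_comp_left B Cc

section Exact

variable {S : Type u₁} [Category.{v₁} S] (R' : TribeStruct S) (G : T ⥤ S)

lemma heq_map
    (hGfib : ∀ {x y : T} (f : x ⟶ y), R.Fib f → R'.Fib (G.map f))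
    (hGano : ∀ {x y : T} (f : x ⟶ y), Anodyne R.Fib f → Anodyne R'.Fib (G.map f))
    (hGterm : IsTerminal (G.obj R.term))
    (hGpb : ∀ {p x y z : T} {fst : p ⟶ x} {snd : p ⟶ y} {f : x ⟶ z} {g : y ⟶ z},
      IsPullback fst snd f g → R.Fib g →
      IsPullback (G.map fst) (G.map snd) (G.map f) (G.map g))
    {x y : T} (f : x ⟶ y) (hf : IsHtpyEquiv R f) : IsHtpyEquiv R' (G.map f) := by
  have key : ∀ {a b : T} (u v : a ⟶ b), Homotopic R u v →
      Homotopic R' (G.map u) (G.map v) := by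
    intro a b u v huv
    let C := mkCPO R b
    obtain ⟨H, h0, h1⟩ := homotopic_to_cpo C huv
    have gpb : IsPullback (G.map C.Po.p₀) (G.map C.Po.p₁)
        (G.map (R.isTerminal.from b)) (G.map (R.isTerminal.from b)) :=
      hGpb C.pbProd (R.all_fibrant b)
    refine ⟨{
      P := G.obj C.Po.P
      σ := G.map C.Po.σ
      π₀ := G.map C.Po.π₀
      π₁ := G.map C.Po.π₁
      σ_anodyne := hGano _ C.Po.σ_anodyne
      σ_π₀ := by rw [← G.map_comp, C.Po.σ_π₀, G.map_id]
      σ_π₁ := by rw [← G.map_comp, C.Po.σ_π₁, G.map_id]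
      prod := G.obj C.Po.prod
      p₀ := G.map C.Po.p₀
      p₁ := G.map C.Po.p₁
      isProd := isLimitBinaryFanOfIsPullback hGterm gpb
      π := G.map C.Po.π
      π_p₀ := by rw [← G.map_comp, C.Po.π_p₀]
      π_p₁ := by rw [← G.map_comp, C.Po.π_p₁]
      π_fib := hGfib _ C.Po.π_fib }, G.map H,
      by rw [← G.map_comp, h0], by rw [← G.map_comp, h1]⟩
  obtain ⟨g', h1, h2⟩ := hf
  refine ⟨G.map g', ?_, ?_⟩
  · have := key _ _ h1
    rw [G.map_comp, G.map_id] at this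
    exact this
  · have := key _ _ h2
    rw [G.map_comp, G.map_id] at this
    exact this

end Exact

end TribeProof


open Paper in
/-- Every tribe, with its fibrations and with homotopy
equivalences as weak equivalences, is a fibration category; moreover every
homomorphism of tribes (a functor preserving fibrations, anodyne morphisms,
terminal objects and pullbacks along fibrations) is an exact functor of the
underlying fibration categories, i.e. it moreover preserves the weak
equivalences (= homotopy equivalences). -/
theorem tribe_isFibCat_and_homomorphism_exact
    {T : Type u} [Category.{v} T] {S : Type u} [Category.{v} S]
    (R : Paper.TribeStruct T) (R' : Paper.TribeStruct S)
    (G : T ⥤ S)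
    (hGfib : ∀ {x y : T} (f : x ⟶ y), R.Fib f → R'.Fib (G.map f))
    (hGano : ∀ {x y : T} (f : x ⟶ y), Anodyne R.Fib f → Anodyne R'.Fib (G.map f))
    (hGterm : IsTerminal (G.obj R.term))
    (hGpb : ∀ {p x y z : T} {fst : p ⟶ x} {snd : p ⟶ y} {f : x ⟶ z} {g : y ⟶ z},
      IsPullback fst snd f g → R.Fib g →
      IsPullback (G.map fst) (G.map snd) (G.map f) (G.map g)) :
    (∃ F : Paper.FibCatStruct T, F.Fib = R.Fib ∧ F.Weq = hW R) ∧
    (∀ {x y : T} (f : x ⟶ y), IsHtpyEquiv R f → IsHtpyEquiv R' (G.map f)) := by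
  constructor
  · refine ⟨{
      Weq := hW R
      Fib := R.Fib
      weq_id := fun x => ⟨𝟙 x, by
        rw [Category.id_comp]; exact TribeProof.homotopic_refl R _, by
        rw [Category.id_comp]; exact TribeProof.homotopic_refl R _⟩
      weq_comp := fun f g hf hg => ?_
      fib_id := R.fib_id
      fib_comp := R.fib_comp
      term := R.term
      isTerminal := R.isTerminal
      all_fibrant := R.all_fibrant
      pullback_exists := R.pullback_exists
      fib_stable := fun pb hg => R.fib_stable pb hg
      acyclic_fib_stable := fun pb hg hge => TribeProof.acyclic_stable R pb hg hge
      factor := ?_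
      two_out_of_six := ?_ }, rfl, rfl⟩
    · -- weq_comp
      refine (TribeProof.heq_iff_isIso R (f ≫ g)).mpr ?_
      haveI := (TribeProof.heq_iff_isIso R f).mp hf
      haveI := (TribeProof.heq_iff_isIso R g).mp hg
      rw [(TribeProof.QF R).map_comp]
      infer_instance
    · -- factor
      intro x y f
      obtain ⟨z, i, q, hi, hq, hfac⟩ := R.factor f
      exact ⟨z, i, q, TribeProof.anodyne_heq R hi, hq, hfac⟩
    · -- two out of six
      intro a b c d f g h hfg hgh
      have h1 : IsIso ((TribeProof.QF R).map (f ≫ g)) :=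
        (TribeProof.heq_iff_isIso R _).mp hfg
      have h2 : IsIso ((TribeProof.QF R).map (g ≫ h)) :=
        (TribeProof.heq_iff_isIso R _).mp hgh
      rw [(TribeProof.QF R).map_comp] at h1 h2
      obtain ⟨hA, hB, hC⟩ := TribeProof.two_of_six_iso ((TribeProof.QF R).map f)
        ((TribeProof.QF R).map g) ((TribeProof.QF R).map h) h1 h2
      refine ⟨(TribeProof.heq_iff_isIso R f).mpr hA,
        (TribeProof.heq_iff_isIso R g).mpr hB,
        (TribeProof.heq_iff_isIso R h).mpr hC,
        (TribeProof.heq_iff_isIso R _).mpr ?_⟩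
      rw [(TribeProof.QF R).map_comp, (TribeProof.QF R).map_comp]
      infer_instance
  · intro x y f hf
    exact TribeProof.heq_map R R' G hGfib hGano hGterm hGpb f hf
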